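/- Let P ⊂ ℝ^N be an integral convex polytope of dimension d such that μ_midp(P) ≥ (d−1)/2, where μ_midp(P) is the smallest k > 0 such that kP has the integer decomposition property. Then nP has the integer decomposition property for every n ≥ μ_midp(P); i.e., μ_idp(P) = μ_midp(P). -/

import Mathlib

open scoped BigOperators Pointwise

/-- Points of `ℝ^N`. -/
abbrev Pt (N : ℕ) := Fin N → ℝ

/-- A point has integer coordinates. -/
def IsLat {N : ℕ} (x : Pt N) : Prop := ∀ i, ∃ z : ℤ, x i = (z : ℝ)

/-- Lattice points of a set. -/
def latPts {N : ℕ} (P : Set (Pt N)) : Set (Pt N) := {x ∈ P | IsLat x}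

/-- The dilated polytope `kP`. -/
def dil {N : ℕ} (k : ℕ) (P : Set (Pt N)) : Set (Pt N) := (k : ℝ) • P

/-- `α` is a sum of `k` lattice points of `P`. -/
def DecomposesIn {N : ℕ} (P : Set (Pt N)) (k : ℕ) (α : Pt N) : Prop :=
  ∃ f : Fin k → Pt N, (∀ i, f i ∈ latPts P) ∧ α = ∑ i, f i

/-- The integer decomposition property. -/
def HasIDP {N : ℕ} (P : Set (Pt N)) : Prop :=
  ∀ k : ℕ, 0 < k → ∀ α ∈ latPts (dil k P), DecomposesIn P k α

/-- Very ampleness: decomposition holds for all sufficiently large `k`. -/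
def VeryAmple {N : ℕ} (P : Set (Pt N)) : Prop :=
  ∃ k₀ : ℕ, ∀ k, k₀ ≤ k → ∀ α ∈ latPts (dil k P), DecomposesIn P k α

/-- An integral convex polytope: the convex hull of finitely many lattice points
(which include all its vertices). -/
def IsIntegralPolytope {N : ℕ} (P : Set (Pt N)) : Prop :=
  ∃ V : Finset (Pt N), (∀ v ∈ V, IsLat v) ∧ P = convexHull ℝ (V : Set (Pt N))

/-- Dimension of a polytope: the rank of the direction of its affine span. -/
noncomputable def polyDim {N : ℕ} (P : Set (Pt N)) : ℕ :=
  Module.finrank ℝ (affineSpan ℝ P).direction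

/-- Lattice points of the cone `C(P) ⊂ ℝ^{N+1}` generated by `P̃ = P × {1}`;
a point of `ℝ^{N+1}` is represented as a pair `(x, deg)`. -/
def coneLat {N : ℕ} (P : Set (Pt N)) : Set (Pt N × ℝ) :=
  {p | (∃ (m : ℕ) (c : Fin m → ℝ) (w : Fin m → Pt N),
        (∀ i, 0 ≤ c i ∧ w i ∈ P) ∧ p.1 = ∑ i, c i • w i ∧ p.2 = ∑ i, c i)
    ∧ IsLat p.1 ∧ ∃ z : ℤ, p.2 = (z : ℝ)}

/-- The monoid `ℤ_{≥0}(P̃ ∩ ℤ^{N+1})` generated by the degree-one lattice points of the cone. -/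
def genMonoid {N : ℕ} (P : Set (Pt N)) : Set (Pt N × ℝ) :=
  {p | ∃ (m : ℕ) (f : Fin m → Pt N), (∀ i, f i ∈ latPts P) ∧
        p.1 = ∑ i, f i ∧ p.2 = (m : ℝ)}

/-- `H` is the minimal Hilbert basis of the cone `C(P)`. -/
def IsMinHilbertBasis {N : ℕ} (P : Set (Pt N)) (H : Set (Pt N × ℝ)) : Prop :=
  (H.Finite ∧ H ⊆ coneLat P ∧
      coneLat P ⊆ (AddSubmonoid.closure H : Set (Pt N × ℝ))) ∧
  ∀ H' : Set (Pt N × ℝ),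
    (H'.Finite ∧ H' ⊆ coneLat P ∧
      coneLat P ⊆ (AddSubmonoid.closure H' : Set (Pt N × ℝ))) → H ⊆ H'

/-- `v` lists the vertices of an empty `d`-simplex contained in `P`. -/
def EmptySimplexIn {N : ℕ} (P : Set (Pt N)) (d : ℕ) (v : Fin (d+1) → Pt N) : Prop :=
  (∀ i, v i ∈ latPts P) ∧ AffineIndependent ℝ v ∧
    ∀ x ∈ convexHull ℝ (Set.range v), IsLat x → x ∈ Set.range v

/-- `Box(S)` of a simplex with vertex list `v`: lattice points
`Σ rᵢ (vᵢ, 1)` with `0 ≤ rᵢ < 1`. -/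
def boxSimplex {N d : ℕ} (v : Fin (d+1) → Pt N) : Set (Pt N × ℝ) :=
  {p | ∃ r : Fin (d+1) → ℝ, (∀ i, 0 ≤ r i ∧ r i < 1) ∧
      p.1 = ∑ i, r i • v i ∧ p.2 = ∑ i, r i ∧ IsLat p.1 ∧ ∃ z : ℤ, p.2 = (z : ℝ)}

/-- `Box(P)`: holes of `P`, i.e. box points of empty `d`-simplices in `P` that are not
nonnegative integer combinations of `P̃ ∩ ℤ^{N+1}`. -/
def boxP {N : ℕ} (P : Set (Pt N)) (d : ℕ) : Set (Pt N × ℝ) :=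
  (⋃ v ∈ {v : Fin (d+1) → Pt N | EmptySimplexIn P d v}, boxSimplex v) \ genMonoid P

/-- Ehrhart counting function `|nP ∩ ℤ^N|`. -/
noncomputable def ehr {N : ℕ} (P : Set (Pt N)) (n : ℕ) : ℕ := (latPts (dil n P)).ncard

/-- The `δ`-vector of a `d`-dimensional polytope, via finite differences of the
Ehrhart counting function. -/
noncomputable def deltaVec {N : ℕ} (P : Set (Pt N)) (d i : ℕ) : ℤ :=
  ∑ j ∈ Finset.range (i+1), (-1)^j * ((d+1).choose j) * (ehr P (i - j) : ℤ)

section AuxIDP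
variable {N : ℕ}

lemma isLat_add {x y : Pt N} (hx : IsLat x) (hy : IsLat y) : IsLat (x + y) := by
  intro i; obtain ⟨a, ha⟩ := hx i; obtain ⟨b, hb⟩ := hy i
  exact ⟨a + b, by simp [Pi.add_apply, ha, hb]⟩

lemma isLat_zero : IsLat (0 : Pt N) := fun i => ⟨0, by simp⟩

lemma isLat_sub {x y : Pt N} (hx : IsLat x) (hy : IsLat y) : IsLat (x - y) := by
  intro i; obtain ⟨a, ha⟩ := hx i; obtain ⟨b, hb⟩ := hy i
  exact ⟨a - b, by simp [Pi.sub_apply, ha, hb]⟩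

lemma isLat_int_smul (z : ℤ) {x : Pt N} (hx : IsLat x) : IsLat ((z : ℝ) • x) := by
  intro i; obtain ⟨a, ha⟩ := hx i
  exact ⟨z * a, by simp [Pi.smul_apply, ha]⟩

lemma isLat_finsetSum {ι : Type*} (s : Finset ι) (f : ι → Pt N)
    (h : ∀ i ∈ s, IsLat (f i)) : IsLat (∑ i ∈ s, f i) := by
  classical
  induction s using Finset.induction_on with
  | empty => simpa using isLat_zero
  | insert _ _ hns ih =>
    rw [Finset.sum_insert hns]
    exact isLat_add (h _ (Finset.mem_insert_self _ _))
      (ih fun i hi => h i (Finset.mem_insert_of_mem hi))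

lemma dil_dil (a b : ℕ) (P : Set (Pt N)) : dil a (dil b P) = dil (a * b) P := by
  unfold dil
  rw [smul_smul]
  push_cast
  ring_nf

lemma dil_one (P : Set (Pt N)) : dil 1 P = P := by
  unfold dil; norm_num

lemma mem_dil_add {P : Set (Pt N)} (hP : Convex ℝ P) {a b : ℕ} {x y : Pt N}
    (hx : x ∈ dil a P) (hy : y ∈ dil b P) : x + y ∈ dil (a + b) P := by
  have h := hP.add_smul (by positivity : (0:ℝ) ≤ a) (by positivity : (0:ℝ) ≤ b)
  have : dil (a + b) P = dil a P + dil b P := by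
    unfold dil; push_cast; rw [h]
  rw [this]
  exact Set.add_mem_add hx hy

lemma latPts_add_mem {P : Set (Pt N)} (hP : Convex ℝ P) {a b : ℕ} {x y : Pt N}
    (hx : x ∈ latPts (dil a P)) (hy : y ∈ latPts (dil b P)) :
    x + y ∈ latPts (dil (a + b) P) :=
  ⟨mem_dil_add hP hx.1 hy.1, isLat_add hx.2 hy.2⟩

lemma dec_add {P : Set (Pt N)} {a b : ℕ} {x y : Pt N}
    (hx : DecomposesIn P a x) (hy : DecomposesIn P b y) :
    DecomposesIn P (a + b) (x + y) := by
  obtain ⟨f, hf, rfl⟩ := hx; obtain ⟨g, hg, rfl⟩ := hy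
  refine ⟨Fin.addCases f g, fun i => ?_, ?_⟩
  · refine Fin.addCases (fun j => ?_) (fun j => ?_) i <;> simp [hf, hg]
  · rw [Fin.sum_univ_add]; simp

lemma dec_zero {P : Set (Pt N)} : DecomposesIn P 0 (0 : Pt N) :=
  ⟨fun i => i.elim0, fun i => i.elim0, by simp⟩

lemma dec_single {Q : Set (Pt N)} {x : Pt N} (h : x ∈ latPts Q) :
    DecomposesIn Q 1 x := ⟨fun _ => x, fun _ => h, by simp⟩

lemma dec_split {P : Set (Pt N)} {a b : ℕ} {x : Pt N}
    (h : DecomposesIn P (a + b) x) :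
    ∃ y z, x = y + z ∧ DecomposesIn P a y ∧ DecomposesIn P b z := by
  obtain ⟨f, hf, rfl⟩ := h
  exact ⟨_, _, Fin.sum_univ_add f,
    ⟨fun i => f (Fin.castAdd b i), fun i => hf _, rfl⟩,
    ⟨fun i => f (Fin.natAdd a i), fun i => hf _, rfl⟩⟩

lemma dec_mem {P : Set (Pt N)} (hP : Convex ℝ P) (hne : P.Nonempty) {c : ℕ} {x : Pt N}
    (h : DecomposesIn P c x) : x ∈ latPts (dil c P) := by
  obtain ⟨f, hf, rfl⟩ := h
  induction c with
  | zero =>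
    refine ⟨?_, by simpa using (isLat_zero : IsLat (0 : Pt N))⟩
    have : dil 0 P = 0 := by
      unfold dil; rw [Nat.cast_zero, Set.zero_smul_set hne]
    rw [this]; simp
  | succ n ih =>
    have hsum : ∑ i : Fin (n+1), f i = (∑ i : Fin n, f i.castSucc) + f (Fin.last n) :=
      Fin.sum_univ_castSucc f
    rw [hsum]
    have h1 : f (Fin.last n) ∈ latPts (dil 1 P) := by
      rw [dil_one]; exact hf _
    exact latPts_add_mem hP (ih (fun i => f i.castSucc) (fun i => hf _)) h1

lemma dec_mem' {P : Set (Pt N)} (hP : Convex ℝ P) (hne : P.Nonempty) {c : ℕ} {x : Pt N}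
    (h : DecomposesIn P c x) : x ∈ dil c P := (dec_mem hP hne h).1

lemma dec_group {P : Set (Pt N)} (hP : Convex ℝ P) (hne : P.Nonempty) {a b : ℕ} {x : Pt N}
    (h : DecomposesIn P (a * b) x) : DecomposesIn (dil b P) a x := by
  obtain ⟨f, hf, rfl⟩ := h
  refine ⟨fun i => ∑ j : Fin b, f (finProdFinEquiv (i, j)),
    fun i => dec_mem hP hne ⟨fun j => f (finProdFinEquiv (i, j)), fun j => hf _, rfl⟩, ?_⟩
  rw [← Equiv.sum_comp finProdFinEquiv (fun i => f i), Fintype.sum_prod_type]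

lemma dec_const {P : Set (Pt N)} {v : Pt N} (hv : v ∈ latPts P) (c : ℕ) :
    DecomposesIn P c ((c : ℝ) • v) := by
  refine ⟨fun _ => v, fun _ => hv, ?_⟩
  rw [Finset.sum_const, Finset.card_univ, Fintype.card_fin, Nat.cast_smul_eq_nsmul]

lemma dec_combo {P : Set (Pt N)} (t : Finset (Pt N)) (h : ∀ v ∈ t, v ∈ latPts P)
    (c : Pt N → ℕ) :
    DecomposesIn P (∑ v ∈ t, c v) (∑ v ∈ t, (c v : ℝ) • v) := by
  classical
  induction t using Finset.induction_on with
  | empty => simpa using dec_zero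
  | insert _ _ hns ih =>
    rw [Finset.sum_insert hns, Finset.sum_insert hns]
    exact dec_add (dec_const (h _ (Finset.mem_insert_self _ _)) _)
      (ih fun v hv => h v (Finset.mem_insert_of_mem hv))

lemma latPts_finite {S : Set (Pt N)} (hS : Bornology.IsBounded S) : (latPts S).Finite := by
  obtain ⟨r, hr⟩ := hS.subset_closedBall 0
  have hsub : latPts S ⊆ (fun z : Fin N → ℤ => fun i => (z i : ℝ)) ''
      {z | ∀ i, |z i| ≤ ⌈r⌉} := by
    rintro x ⟨hxS, hlat⟩
    choose z hz using hlat
    refine ⟨z, fun i => ?_, by funext i; exact (hz i).symm⟩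
    have hx : ‖x‖ ≤ r := by
      have := hr hxS
      rwa [Metric.mem_closedBall, dist_zero_right] at this
    have h1 : |x i| ≤ r := by
      calc |x i| = ‖x i‖ := (Real.norm_eq_abs _).symm
        _ ≤ ‖x‖ := norm_le_pi_norm x i
        _ ≤ r := hx
    have h2 : |(z i : ℝ)| ≤ (⌈r⌉ : ℝ) := by
      rw [← hz i]; exact h1.trans (Int.le_ceil r)
    exact_mod_cast h2
  refine Set.Finite.subset (Set.Finite.image _ ?_) hsub
  have : {z : Fin N → ℤ | ∀ i, |z i| ≤ ⌈r⌉} ⊆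
      Set.pi Set.univ (fun _ : Fin N => Set.Icc (-⌈r⌉) ⌈r⌉) := by
    intro z hz i _
    exact abs_le.1 (hz i)
  exact (Set.Finite.pi (fun _ => Set.finite_Icc _ _)).subset this

lemma unique_weights {t : Finset (Pt N)} (ht : AffineIndependent ℝ ((↑) : t → Pt N))
    {w₁ w₂ : Pt N → ℝ} (h₁ : ∑ v ∈ t, w₁ v = 1) (h₂ : ∑ v ∈ t, w₂ v = 1)
    (hc : ∑ v ∈ t, w₁ v • v = ∑ v ∈ t, w₂ v • v) : ∀ v ∈ t, w₁ v = w₂ v := by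
  intro v hv
  have key := ht.eq_of_sum_eq_sum (s := Finset.univ)
    (w₁ := fun i : t => w₁ ↑i) (w₂ := fun i : t => w₂ ↑i) ?_ ?_ ⟨v, hv⟩ (Finset.mem_univ _)
  · exact key
  · rw [Finset.sum_coe_sort t w₁, Finset.sum_coe_sort t w₂] at *
    rw [h₁, h₂]
  · show ∑ i : t, w₁ ↑i • (↑i : Pt N) = ∑ i : t, w₂ ↑i • (↑i : Pt N)
    rw [Finset.sum_coe_sort t (fun v => w₁ v • v), Finset.sum_coe_sort t (fun v => w₂ v • v)]
    exact hc

lemma card_le_of_affIndep {P : Set (Pt N)} {d : ℕ} (hdim : polyDim P = d)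
    {t : Finset (Pt N)} (hts : (t : Set (Pt N)) ⊆ P)
    (ht : AffineIndependent ℝ ((↑) : t → Pt N)) : t.card ≤ d + 1 := by
  rcases Finset.eq_empty_or_nonempty t with rfl | hne
  · simp
  have hcard : Fintype.card t = (t.card - 1) + 1 := by
    rw [Fintype.card_coe]
    have := Finset.card_pos.2 hne
    omega
  have h1 := ht.finrank_vectorSpan hcard
  have hrange : Set.range ((↑) : t → Pt N) = (t : Set (Pt N)) := Subtype.range_coe
  rw [hrange] at h1
  have h2 : vectorSpan ℝ (t : Set (Pt N)) ≤ (affineSpan ℝ P).direction := by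
    rw [direction_affineSpan]
    exact vectorSpan_mono ℝ hts
  have h3 : Module.finrank ℝ (vectorSpan ℝ (t : Set (Pt N))) ≤ d := by
    rw [← hdim]
    exact Submodule.finrank_mono h2
  omega

lemma mem_convexHull_finset {t : Finset (Pt N)} {x : Pt N} :
    x ∈ convexHull ℝ (t : Set (Pt N)) ↔
      ∃ w : Pt N → ℝ, (∀ y ∈ t, 0 ≤ w y) ∧ ∑ y ∈ t, w y = 1 ∧ ∑ y ∈ t, w y • y = x := by
  rw [Finset.convexHull_eq]
  constructor
  · rintro ⟨w, h0, h1, h2⟩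
    exact ⟨w, h0, h1, by rw [← h2, Finset.centerMass_eq_of_sum_1 _ _ h1]; rfl⟩
  · rintro ⟨w, h0, h1, h2⟩
    exact ⟨w, h0, h1, by rw [Finset.centerMass_eq_of_sum_1 _ _ h1]; exact h2⟩

lemma single_weight_comb {t : Finset (Pt N)} {j : Pt N} (hjt : j ∈ t) :
    ∑ v ∈ t, (if v = j then (1:ℝ) else 0) • v = j := by
  classical
  have : ∀ v, (if v = j then (1:ℝ) else 0) • v = (if v = j then v else 0) := by
    intro v; split_ifs <;> simp
  rw [Finset.sum_congr rfl fun v _ => this v, Finset.sum_ite_eq' t j (fun v => v), if_pos hjt]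

lemma single_weight_sum {t : Finset (Pt N)} {j : Pt N} (hjt : j ∈ t) :
    ∑ v ∈ t, (if v = j then (1:ℝ) else 0) = 1 := by
  classical
  rw [Finset.sum_ite_eq' t j (fun _ => (1:ℝ)), if_pos hjt]

lemma exchange {t : Finset (Pt N)} (ht : AffineIndependent ℝ ((↑) : t → Pt N))
    {x u : Pt N} (hx : x ∈ convexHull ℝ (t : Set (Pt N)))
    (hu : u ∈ convexHull ℝ (t : Set (Pt N))) (hut : u ∉ t) :
    ∃ j ∈ t, x ∈ convexHull ℝ ((insert u (t.erase j) : Finset (Pt N)) : Set (Pt N)) ∧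
      j ∉ convexHull ℝ ((insert u (t.erase j) : Finset (Pt N)) : Set (Pt N)) := by
  classical
  obtain ⟨a, ha0, ha1, hax⟩ := mem_convexHull_finset.1 hx
  obtain ⟨b, hb0, hb1, hbu⟩ := mem_convexHull_finset.1 hu
  have hF : (t.filter fun v => 0 < b v).Nonempty := by
    by_contra h
    rw [Finset.not_nonempty_iff_eq_empty] at h
    have hall : ∑ v ∈ t, b v = 0 := Finset.sum_eq_zero fun v hv => by
      have h1 : ¬ 0 < b v := fun hb =>
        (Finset.eq_empty_iff_forall_notMem.1 h v (Finset.mem_filter.2 ⟨hv, hb⟩))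
      linarith [hb0 v hv]
    rw [hb1] at hall; norm_num at hall
  obtain ⟨j, hjF, hjmin⟩ := Finset.exists_min_image _ (fun v => a v / b v) hF
  obtain ⟨hjt, hbj⟩ := Finset.mem_filter.1 hjF
  set lam := a j / b j with hlam
  have hlam0 : 0 ≤ lam := div_nonneg (ha0 j hjt) hbj.le
  have hkey : a j - lam * b j = 0 := by
    rw [hlam, div_mul_cancel₀ _ (ne_of_gt hbj)]; ring
  have hjne : j ≠ u := fun h => hut (h ▸ hjt)
  have huerase : u ∉ t.erase j := fun h => hut (Finset.mem_of_mem_erase h)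
  set t₁ : Finset (Pt N) := insert u (t.erase j) with ht₁def
  set w : Pt N → ℝ := fun v => if v = u then lam else a v - lam * b v with hw
  have hw_u : w u = lam := by simp [hw]
  have hw_t : ∀ v ∈ t, w v = a v - lam * b v := by
    intro v hv
    rw [hw]; simp only
    rw [if_neg (fun h : v = u => hut (h ▸ hv))]
  have hsum_t : ∑ v ∈ t, (a v - lam * b v) = 1 - lam := by
    rw [Finset.sum_sub_distrib, ← Finset.mul_sum, hb1, ha1, mul_one]
  have hsum_erase : ∑ v ∈ t.erase j, (a v - lam * b v) = 1 - lam :=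
    (Finset.sum_erase t hkey).trans hsum_t
  have hw_sum : ∑ v ∈ t₁, w v = 1 := by
    rw [ht₁def, Finset.sum_insert huerase, hw_u]
    have h5 : ∑ v ∈ t.erase j, w v = ∑ v ∈ t.erase j, (a v - lam * b v) :=
      Finset.sum_congr rfl fun v hv => hw_t v (Finset.mem_of_mem_erase hv)
    rw [h5, hsum_erase]; ring
  have hw_comb : ∑ v ∈ t₁, w v • v = x := by
    rw [ht₁def, Finset.sum_insert huerase, hw_u]
    have h1 : ∑ v ∈ t.erase j, w v • v = ∑ v ∈ t.erase j, (a v - lam * b v) • v :=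
      Finset.sum_congr rfl fun v hv => by rw [hw_t v (Finset.mem_of_mem_erase hv)]
    have h2 : ∑ v ∈ t.erase j, (a v - lam * b v) • v = ∑ v ∈ t, (a v - lam * b v) • v :=
      Finset.sum_erase _ (by rw [hkey, zero_smul])
    have h3 : ∑ v ∈ t, (a v - lam * b v) • v = x - lam • u := by
      rw [← hax, ← hbu, Finset.smul_sum, ← Finset.sum_sub_distrib]
      exact Finset.sum_congr rfl fun v hv => by rw [sub_smul, smul_smul]
    rw [h1, h2, h3]; abel
  have hw_nonneg : ∀ v ∈ t₁, 0 ≤ w v := by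
    intro v hv
    rw [ht₁def, Finset.mem_insert] at hv
    rcases hv with rfl | hv
    · rw [hw_u]; exact hlam0
    · have hvt := Finset.mem_of_mem_erase hv
      rw [hw_t v hvt]
      by_cases hbv : 0 < b v
      · have hm := hjmin v (Finset.mem_filter.2 ⟨hvt, hbv⟩)
        have : lam * b v ≤ a v := by
          rw [← le_div_iff₀ hbv]; exact hm
        linarith
      · have hb0' : b v = 0 := le_antisymm (not_lt.1 hbv) (hb0 v hvt)
        rw [hb0']; simpa using ha0 v hvt
  refine ⟨j, hjt, mem_convexHull_finset.2 ⟨w, hw_nonneg, hw_sum, hw_comb⟩, ?_⟩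
  -- b j < 1
  have hbj1 : b j < 1 := by
    by_contra h
    push_neg at h
    have hsplit : b j + ∑ v ∈ t.erase j, b v = 1 := by
      rw [Finset.add_sum_erase t b hjt]; exact hb1
    have hnn : 0 ≤ ∑ v ∈ t.erase j, b v :=
      Finset.sum_nonneg fun v hv => hb0 v (Finset.mem_of_mem_erase hv)
    have hothers : ∑ v ∈ t.erase j, b v = 0 := by linarith
    have hallz : ∀ v ∈ t.erase j, b v = 0 :=
      (Finset.sum_eq_zero_iff_of_nonneg fun v hv => hb0 v (Finset.mem_of_mem_erase hv)).1 hothers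
    have hbj' : b j = 1 := by linarith
    have hu' : u = j := by
      rw [← hbu, ← Finset.add_sum_erase t (fun v => b v • v) hjt,
        Finset.sum_eq_zero (fun v hv => by rw [hallz v hv, zero_smul]), add_zero, hbj', one_smul]
    exact hut (hu' ▸ hjt)
  intro hjmem
  obtain ⟨c, hc0, hc1, hcj⟩ := mem_convexHull_finset.1 hjmem
  have hcu0 : 0 ≤ c u := hc0 u (Finset.mem_insert_self _ _)
  have hcu1 : c u ≤ 1 := by
    have h6 : c u ≤ ∑ v ∈ t₁, c v :=
      Finset.single_le_sum (fun v hv => hc0 v hv) (Finset.mem_insert_self _ _)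
    linarith
  have herasesum : ∑ v ∈ t.erase j, c v = 1 - c u := by
    have h7 : ∑ y ∈ insert u (t.erase j), c y = c u + ∑ v ∈ t.erase j, c v :=
      Finset.sum_insert huerase
    rw [h7] at hc1
    linarith
  set c' : Pt N → ℝ := fun v => (if v = j then 0 else c v) + c u * b v with hc'
  have h4 : ∑ v ∈ t, (if v = j then (0:ℝ) else c v) = ∑ v ∈ t.erase j, c v := by
    rw [← Finset.add_sum_erase t _ hjt, if_pos rfl, zero_add]
    exact Finset.sum_congr rfl fun v hv => if_neg (Finset.ne_of_mem_erase hv)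
  have hc'sum : ∑ v ∈ t, c' v = 1 := by
    rw [hc']
    rw [Finset.sum_add_distrib, ← Finset.mul_sum, hb1, mul_one, h4, herasesum]
    ring
  have hc'comb : ∑ v ∈ t, c' v • v = j := by
    rw [hc']
    have hsplit : ∀ v, ((if v = j then (0:ℝ) else c v) + c u * b v) • v
        = (if v = j then (0:ℝ) else c v) • v + (c u * b v) • v := fun v => add_smul _ _ _
    rw [Finset.sum_congr rfl fun v _ => hsplit v, Finset.sum_add_distrib]
    have hA : ∑ v ∈ t, (if v = j then (0:ℝ) else c v) • v = ∑ v ∈ t.erase j, c v • v := by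
      rw [← Finset.add_sum_erase t _ hjt, if_pos rfl, zero_smul, zero_add]
      exact Finset.sum_congr rfl fun v hv => by rw [if_neg (Finset.ne_of_mem_erase hv)]
    have hB : ∑ v ∈ t, (c u * b v) • v = c u • u := by
      calc ∑ v ∈ t, (c u * b v) • v = c u • ∑ v ∈ t, b v • v := by
            rw [Finset.smul_sum]
            exact Finset.sum_congr rfl fun v _ => (smul_smul _ _ _).symm
        _ = c u • u := by rw [hbu]
    rw [hA, hB]
    calc ∑ v ∈ t.erase j, c v • v + c u • u = ∑ y ∈ insert u (t.erase j), c y • y := by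
          rw [Finset.sum_insert huerase]; abel
      _ = j := hcj
  have huniq := unique_weights ht (w₁ := c') (w₂ := fun v => if v = j then 1 else 0)
    hc'sum (single_weight_sum hjt) (by rw [hc'comb, single_weight_comb hjt]) j hjt
  have hcj' : c u * b j = 1 := by
    have h8 : c' j = 1 := by rw [huniq]; simp
    rw [hc'] at h8
    simpa using h8
  nlinarith [hb0 j hjt]

lemma convexHull_finset_bounded (t : Finset (Pt N)) :
    Bornology.IsBounded (convexHull ℝ (t : Set (Pt N))) :=
  (t.finite_toSet.isCompact_convexHull (𝕜 := ℝ)).isBounded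

lemma refine_step (n : ℕ) : ∀ (t : Finset (Pt N)), (∀ p ∈ t, IsLat p) →
    AffineIndependent ℝ ((↑) : t → Pt N) →
    (latPts (convexHull ℝ (t : Set (Pt N)))).ncard ≤ n →
    ∀ x ∈ convexHull ℝ (t : Set (Pt N)), ∃ t' : Finset (Pt N),
      (∀ p ∈ t', IsLat p) ∧ AffineIndependent ℝ ((↑) : t' → Pt N) ∧
      (t' : Set (Pt N)) ⊆ convexHull ℝ (t : Set (Pt N)) ∧
      x ∈ convexHull ℝ (t' : Set (Pt N)) ∧
      (∀ y ∈ convexHull ℝ (t' : Set (Pt N)), IsLat y → y ∈ t') := by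
  classical
  induction n with
  | zero =>
    intro t hlat hai hn x hx
    refine ⟨t, hlat, hai, subset_convexHull ℝ _, hx, fun y hy hylat => ?_⟩
    have hfin : (latPts (convexHull ℝ (t : Set (Pt N)))).Finite :=
      latPts_finite (convexHull_finset_bounded t)
    have hemp : latPts (convexHull ℝ (t : Set (Pt N))) = ∅ := by
      rw [← Set.ncard_eq_zero hfin]; omega
    exact absurd (show y ∈ latPts (convexHull ℝ (t : Set (Pt N))) from ⟨hy, hylat⟩)
      (by rw [hemp]; exact Set.notMem_empty y)
  | succ n ih =>
    intro t hlat hai hn x hx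
    by_cases hempty : ∀ y ∈ convexHull ℝ (t : Set (Pt N)), IsLat y → y ∈ t
    · exact ⟨t, hlat, hai, subset_convexHull ℝ _, hx, hempty⟩
    · push_neg at hempty
      obtain ⟨u, humem, hulat, hut⟩ := hempty
      obtain ⟨j, hjt, hx₁, hj₁⟩ := exchange hai hx humem hut
      set t₁ : Finset (Pt N) := insert u (t.erase j) with ht₁def
      have hx₂ := hx₁
      rw [convexHull_eq_union] at hx₂
      simp only [Set.mem_iUnion] at hx₂
      obtain ⟨t₂, ht₂sub, ht₂ai, hxt₂⟩ := hx₂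
      have ht₁P : (t₁ : Set (Pt N)) ⊆ convexHull ℝ (t : Set (Pt N)) := by
        intro p hp
        rcases Finset.mem_insert.1 hp with rfl | hp'
        · exact humem
        · exact subset_convexHull ℝ _ (Finset.mem_of_mem_erase hp')
      have hconv1t : convexHull ℝ (t₁ : Set (Pt N)) ⊆ convexHull ℝ (t : Set (Pt N)) :=
        convexHull_min ht₁P (convex_convexHull ℝ _)
      have hconv21 : convexHull ℝ (t₂ : Set (Pt N)) ⊆ convexHull ℝ (t₁ : Set (Pt N)) :=
        convexHull_mono ht₂sub
      have ht₂lat : ∀ p ∈ t₂, IsLat p := by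
        intro p hp
        rcases Finset.mem_insert.1 (ht₂sub hp) with rfl | hp'
        · exact hulat
        · exact hlat p (Finset.mem_of_mem_erase hp')
      have hjlat : j ∈ latPts (convexHull ℝ (t : Set (Pt N))) :=
        ⟨subset_convexHull ℝ _ hjt, hlat j hjt⟩
      have hfin : (latPts (convexHull ℝ (t : Set (Pt N)))).Finite :=
        latPts_finite (convexHull_finset_bounded t)
      have hsub : latPts (convexHull ℝ (t₂ : Set (Pt N))) ⊆
          latPts (convexHull ℝ (t : Set (Pt N))) \ {j} := by
        rintro y ⟨hy, hylat⟩
        refine ⟨⟨hconv1t (hconv21 hy), hylat⟩, ?_⟩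
        simp only [Set.mem_singleton_iff]
        rintro rfl
        exact hj₁ (hconv21 hy)
      have hmeas : (latPts (convexHull ℝ (t₂ : Set (Pt N)))).ncard ≤ n := by
        have h1 : (latPts (convexHull ℝ (t₂ : Set (Pt N)))).ncard ≤
            (latPts (convexHull ℝ (t : Set (Pt N))) \ {j}).ncard :=
          Set.ncard_le_ncard hsub hfin.diff
        have h2 : (latPts (convexHull ℝ (t : Set (Pt N))) \ {j}).ncard =
            (latPts (convexHull ℝ (t : Set (Pt N)))).ncard - 1 :=
          Set.ncard_diff_singleton_of_mem hjlat
        have h3 : 0 < (latPts (convexHull ℝ (t : Set (Pt N)))).ncard :=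
          Set.ncard_pos hfin |>.2 ⟨j, hjlat⟩
        omega
      obtain ⟨t', h1, h2, h3, h4, h5⟩ := ih t₂ ht₂lat ht₂ai hmeas x hxt₂
      exact ⟨t', h1, h2, h3.trans (hconv21.trans hconv1t), h4, h5⟩

lemma exists_empty_simplex {V : Finset (Pt N)} (hV : ∀ v ∈ V, IsLat v)
    {x : Pt N} (hx : x ∈ convexHull ℝ (V : Set (Pt N))) :
    ∃ t : Finset (Pt N),
      (∀ p ∈ t, IsLat p) ∧ AffineIndependent ℝ ((↑) : t → Pt N) ∧
      (t : Set (Pt N)) ⊆ convexHull ℝ (V : Set (Pt N)) ∧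
      x ∈ convexHull ℝ (t : Set (Pt N)) ∧
      (∀ y ∈ convexHull ℝ (t : Set (Pt N)), IsLat y → y ∈ t) := by
  classical
  rw [convexHull_eq_union] at hx
  simp only [Set.mem_iUnion] at hx
  obtain ⟨t₀, ht₀V, ht₀ai, hxt₀⟩ := hx
  obtain ⟨t', h1, h2, h3, h4, h5⟩ := refine_step (latPts (convexHull ℝ (t₀ : Set (Pt N)))).ncard
    t₀ (fun p hp => hV p (ht₀V hp)) ht₀ai le_rfl x hxt₀
  exact ⟨t', h1, h2, h3.trans (convexHull_mono ht₀V), h4, h5⟩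

lemma structure_decomp {V : Finset (Pt N)} {d : ℕ} (hV : ∀ v ∈ V, IsLat v)
    (hcard : ∀ t : Finset (Pt N), (t : Set (Pt N)) ⊆ convexHull ℝ (V : Set (Pt N)) →
      AffineIndependent ℝ ((↑) : t → Pt N) → t.card ≤ d + 1)
    (M : ℕ) (α : Pt N) (hα : α ∈ latPts (dil M (convexHull ℝ (V : Set (Pt N))))) :
    ∃ s γ q, s ≤ d - 1 ∧ s ≤ M ∧ α = γ + q ∧
      γ ∈ latPts (dil s (convexHull ℝ (V : Set (Pt N)))) ∧
      DecomposesIn (convexHull ℝ (V : Set (Pt N))) (M - s) q := by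
  classical
  set P := convexHull ℝ (V : Set (Pt N)) with hPdef
  obtain ⟨hmem, hlatα⟩ := hα
  obtain ⟨x, hxP, hxα⟩ := Set.mem_smul_set.1 hmem
  obtain ⟨t, htlat, htai, htP, hxt, htempty⟩ := exists_empty_simplex hV hxP
  have htne : t.Nonempty := by
    rcases Finset.eq_empty_or_nonempty t with rfl | h
    · simp at hxt
    · exact h
  obtain ⟨a, ha0, ha1, hax⟩ := mem_convexHull_finset.1 hxt
  set μ : Pt N → ℝ := fun v => (M : ℝ) * a v with hμ
  have hμ0 : ∀ v ∈ t, 0 ≤ μ v := fun v hv => mul_nonneg (Nat.cast_nonneg M) (ha0 v hv)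
  have hμsum : ∑ v ∈ t, μ v = (M : ℝ) := by
    rw [hμ, ← Finset.mul_sum, ha1, mul_one]
  have hαsum : α = ∑ v ∈ t, μ v • v := by
    rw [← hxα, ← hax, Finset.smul_sum]
    exact Finset.sum_congr rfl fun v _ => (smul_smul _ _ _)
  set F : ℤ := ∑ v ∈ t, ⌊μ v⌋ with hF
  have hfl0 : ∀ v ∈ t, 0 ≤ ⌊μ v⌋ := fun v hv => Int.floor_nonneg.2 (hμ0 v hv)
  have hF0 : 0 ≤ F := Finset.sum_nonneg hfl0
  have hfr0 : ∀ v : Pt N, 0 ≤ Int.fract (μ v) := fun v => Int.fract_nonneg _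
  have hfr1 : ∀ v : Pt N, Int.fract (μ v) < 1 := fun v => Int.fract_lt_one _
  have hfrsum : ∑ v ∈ t, Int.fract (μ v) = (M : ℝ) - (F : ℝ) := by
    rw [hF, ← hμsum]
    push_cast
    rw [← Finset.sum_sub_distrib]
    exact Finset.sum_congr rfl fun v _ => rfl
  have hFM : F ≤ (M : ℤ) := by
    have h1 : (0:ℝ) ≤ (M:ℝ) - (F:ℝ) := hfrsum ▸ Finset.sum_nonneg fun v _ => hfr0 v
    have h2 : (F:ℝ) ≤ (M:ℝ) := by linarith
    exact_mod_cast h2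
  set Fn := F.toNat with hFn
  have hFnF : (Fn : ℤ) = F := Int.toNat_of_nonneg hF0
  have hFnM : Fn ≤ M := by omega
  set s := M - Fn with hs
  have hsM : s ≤ M := Nat.sub_le _ _
  have hsR : (s : ℝ) = ∑ v ∈ t, Int.fract (μ v) := by
    rw [hfrsum, hs, Nat.cast_sub hFnM, ← hFnF]
    push_cast
    ring
  set γ := ∑ v ∈ t, Int.fract (μ v) • v with hγ
  set q := ∑ v ∈ t, ((⌊μ v⌋ : ℝ)) • v with hq
  have hαγq : α = γ + q := by
    rw [hαsum, hγ, hq, ← Finset.sum_add_distrib]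
    exact Finset.sum_congr rfl fun v _ => by
      rw [← add_smul, Int.fract_add_floor]
  have hqlat : IsLat q := isLat_finsetSum _ _ fun v hv => isLat_int_smul _ (htlat v hv)
  have hγlat : IsLat γ := by
    have hγe : γ = α - q := by rw [hαγq]; abel
    rw [hγe]; exact isLat_sub hlatα hqlat
  have htsubP : convexHull ℝ (t : Set (Pt N)) ⊆ P :=
    convexHull_min htP (convex_convexHull ℝ _)
  have hcardt : t.card ≤ d + 1 := hcard t htP htai
  have hslt : (s:ℝ) < (t.card : ℝ) := by
    rw [hsR]
    calc ∑ v ∈ t, Int.fract (μ v) < ∑ _v ∈ t, (1:ℝ) :=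
          Finset.sum_lt_sum_of_nonempty htne fun v _ => hfr1 v
      _ = (t.card : ℝ) := by simp
  have hscard : s < t.card := by exact_mod_cast hslt
  have hsd : s ≤ d - 1 := by
    by_contra hcon
    have hd1 : 1 ≤ d := by omega
    have hseq : s = d := by omega
    have hcardeq : t.card = d + 1 := by omega
    have hpos : ∀ v ∈ t, 0 < Int.fract (μ v) := by
      intro v hv
      by_contra hle
      have h0 : Int.fract (μ v) = 0 := le_antisymm (not_lt.1 hle) (hfr0 v)
      have hce : (t.erase v).card = d := by
        rw [Finset.card_erase_of_mem hv, hcardeq]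
        omega
      have herasene : (t.erase v).Nonempty := by
        rw [← Finset.card_pos, hce]; omega
      have hlt : ∑ w ∈ t.erase v, Int.fract (μ w) < ((t.erase v).card : ℝ) := by
        calc ∑ w ∈ t.erase v, Int.fract (μ w) < ∑ _w ∈ t.erase v, (1:ℝ) :=
              Finset.sum_lt_sum_of_nonempty herasene fun w _ => hfr1 w
          _ = ((t.erase v).card : ℝ) := by simp
      have hsum_split := Finset.add_sum_erase t (fun w => Int.fract (μ w)) hv
      simp only [h0, zero_add] at hsum_split
      rw [hce] at hlt
      have hsd2 : (s:ℝ) = (d:ℝ) := by rw [hseq]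
      rw [hsum_split, ← hsR, hsd2] at hlt
      linarith
    set δ := ∑ v ∈ t, (1 - Int.fract (μ v)) • v with hδ
    have hδsum : ∑ v ∈ t, (1 - Int.fract (μ v)) = 1 := by
      rw [Finset.sum_sub_distrib, Finset.sum_const, ← hsR]
      have h9 : s = d := hseq
      rw [hcardeq]
      rw [h9]
      push_cast
      ring
    have hδmem : δ ∈ convexHull ℝ (t : Set (Pt N)) := mem_convexHull_finset.2
      ⟨fun v => 1 - Int.fract (μ v), fun v _ => by
        show (0:ℝ) ≤ 1 - Int.fract (μ v)
        linarith [hfr1 v], hδsum, rfl⟩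
    have hδlat : IsLat δ := by
      have hδe : δ = (∑ v ∈ t, v) - γ := by
        rw [hδ, hγ, ← Finset.sum_sub_distrib]
        exact Finset.sum_congr rfl fun v _ => by rw [sub_smul, one_smul]
      rw [hδe]
      exact isLat_sub (isLat_finsetSum _ _ fun v hv => htlat v hv) hγlat
    have hδt : δ ∈ t := htempty δ hδmem hδlat
    have huniq := unique_weights htai (w₁ := fun v => 1 - Int.fract (μ v))
      (w₂ := fun v => if v = δ then 1 else 0) hδsum (single_weight_sum hδt)
      (by rw [single_weight_comb hδt]) δ hδt
    have huniq' : 1 - Int.fract (μ δ) = if δ = δ then (1:ℝ) else 0 := huniq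
    rw [if_pos rfl] at huniq'
    have := hpos δ hδt
    linarith
  have hγmem : γ ∈ dil s P := by
    rcases Nat.eq_zero_or_pos s with hs0 | hs0
    · have hall : ∀ v ∈ t, Int.fract (μ v) = 0 := by
        have hz : ∑ v ∈ t, Int.fract (μ v) = 0 := by
          rw [← hsR, hs0]; simp
        exact (Finset.sum_eq_zero_iff_of_nonneg fun v _ => hfr0 v).1 hz
      have hγ0 : γ = 0 := Finset.sum_eq_zero fun v hv => by rw [hall v hv, zero_smul]
      rw [hγ0, hs0]
      have hPne : P.Nonempty := ⟨x, hxP⟩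
      show (0 : Pt N) ∈ dil 0 P
      unfold dil
      rw [Nat.cast_zero, Set.zero_smul_set hPne]
      simp
    · have hsne : (s:ℝ) ≠ 0 := by
        exact_mod_cast Nat.pos_iff_ne_zero.1 hs0
      set y := ∑ v ∈ t, (Int.fract (μ v) / s) • v with hy
      have hymem : y ∈ convexHull ℝ (t : Set (Pt N)) := mem_convexHull_finset.2
        ⟨fun v => Int.fract (μ v) / s, fun v _ => div_nonneg (hfr0 v) (Nat.cast_nonneg s),
          by rw [← Finset.sum_div, ← hsR]; field_simp, rfl⟩
      refine Set.mem_smul_set.2 ⟨y, htsubP hymem, ?_⟩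
      rw [hy, Finset.smul_sum, hγ]
      exact Finset.sum_congr rfl fun v _ => by
        rw [smul_smul, mul_div_cancel₀ _ hsne]
  set c : Pt N → ℕ := fun v => (⌊μ v⌋).toNat with hc
  have hceq : ∀ v ∈ t, ((c v : ℝ)) = ((⌊μ v⌋ : ℤ) : ℝ) := by
    intro v hv
    rw [hc]
    exact_mod_cast congrArg (fun z : ℤ => (z : ℝ)) (Int.toNat_of_nonneg (hfl0 v hv))
  have hqe : q = ∑ v ∈ t, (c v : ℝ) • v := by
    rw [hq]
    exact Finset.sum_congr rfl fun v hv => by rw [hceq v hv]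
  have hcsumZ : ((∑ v ∈ t, c v : ℕ) : ℤ) = F := by
    rw [hF]
    push_cast
    exact Finset.sum_congr rfl fun v hv => Int.toNat_of_nonneg (hfl0 v hv)
  have hcsum : ∑ v ∈ t, c v = M - s := by
    have h10 : ∑ v ∈ t, c v = Fn := by omega
    omega
  have hdec : DecomposesIn P (M - s) q := by
    rw [hqe, ← hcsum]
    exact dec_combo t (fun v hv => ⟨htsubP (subset_convexHull ℝ _ hv), htlat v hv⟩) c
  exact ⟨s, γ, q, hsd, hsM, hαγq, ⟨hγmem, hγlat⟩, hdec⟩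

end AuxIDP

/-- if `μ_midp(P) ≥ (d-1)/2`, then `nP` has (IDP) for all
`n ≥ μ_midp(P)`; i.e. `μ_idp(P) = μ_midp(P)`. -/
theorem idp_eq_midp {N d : ℕ} (P : Set (Pt N))
    (hP : IsIntegralPolytope P) (hdim : polyDim P = d)
    (k : ℕ) (hk : IsLeast {k : ℕ | 0 < k ∧ HasIDP (dil k P)} k)
    (hbig : (d : ℝ) - 1 ≤ 2 * k) :
    (∀ n, k ≤ n → HasIDP (dil n P)) ∧
    IsLeast {k' : ℕ | 0 < k' ∧ ∀ n, k' ≤ n → HasIDP (dil n P)} k := by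
  obtain ⟨⟨hk0, hkidp⟩, hkmin⟩ := hk
  have hd2k : d ≤ 2 * k + 1 := by
    have h1 : (d : ℝ) ≤ 2 * (k : ℝ) + 1 := by linarith
    exact_mod_cast h1
  obtain ⟨V, hV, hPV⟩ := hP
  subst hPV
  have hConv : Convex ℝ (convexHull ℝ (V : Set (Pt N))) := convex_convexHull ℝ _
  have hcard : ∀ t : Finset (Pt N), (t : Set (Pt N)) ⊆ convexHull ℝ (V : Set (Pt N)) →
      AffineIndependent ℝ ((↑) : t → Pt N) → t.card ≤ d + 1 :=
    fun t hts hai => card_le_of_affIndep hdim hts hai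
  have main : ∀ n, k ≤ n → HasIDP (dil n (convexHull ℝ (V : Set (Pt N)))) := by
    intro n hn m hm α hα
    rw [dil_dil] at hα
    by_cases hm1 : m = 1
    · subst hm1
      rw [one_mul] at hα
      exact dec_single hα
    · have hm2 : 2 ≤ m := by omega
      obtain ⟨m', rfl⟩ : ∃ m', m = m' + 2 := ⟨m - 2, by omega⟩
      have hPne : (convexHull ℝ (V : Set (Pt N))).Nonempty := by
        obtain ⟨y, hy, -⟩ := Set.mem_smul_set.1 hα.1
        exact ⟨y, hy⟩
      obtain ⟨s, γ, q, hsd, hsM, hαγq, hγ, hq⟩ :=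
        structure_decomp hV hcard ((m' + 2) * n) α hα
      have hs2k : s ≤ 2 * k := by omega
      set A := m' * n with hA
      have hmn : (m' + 2) * n = A + 2 * n := by rw [hA]; ring
      rw [hmn] at hsM
      have harith : (m' + 2) * n - s = (2 * k - s) + ((n - k) + ((n - k) + A)) := by
        rw [hmn]; omega
      rw [harith] at hq
      obtain ⟨q₀, q', hq0sum, hq₀, hq'⟩ := dec_split hq
      obtain ⟨q₁, q'', hq1sum, hq₁, hq''⟩ := dec_split hq'
      obtain ⟨q₂, q₃, hq2sum, hq₂, hq₃⟩ := dec_split hq''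
      have hγ' : γ + q₀ ∈ latPts (dil (2 * k) (convexHull ℝ (V : Set (Pt N)))) := by
        have h1 := latPts_add_mem hConv hγ (dec_mem hConv hPne hq₀)
        have h2 : s + (2 * k - s) = 2 * k := by omega
        rwa [h2] at h1
      have hγ'2 : γ + q₀ ∈ latPts (dil 2 (dil k (convexHull ℝ (V : Set (Pt N))))) := by
        rw [dil_dil]; exact hγ'
      obtain ⟨g, hg, hgsum⟩ := hkidp 2 (by norm_num) _ hγ'2
      have hnk : k + (n - k) = n := by omega
      have hA₁ : g 0 + q₁ ∈ latPts (dil n (convexHull ℝ (V : Set (Pt N)))) := by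
        have h1 := latPts_add_mem hConv (hg 0) (dec_mem hConv hPne hq₁)
        rwa [hnk] at h1
      have hA₂ : g 1 + q₂ ∈ latPts (dil n (convexHull ℝ (V : Set (Pt N)))) := by
        have h1 := latPts_add_mem hConv (hg 1) (dec_mem hConv hPne hq₂)
        rwa [hnk] at h1
      have hq₃' : DecomposesIn (dil n (convexHull ℝ (V : Set (Pt N)))) m' q₃ := by
        rw [hA] at hq₃
        exact dec_group hConv hPne hq₃
      have hcomb := dec_add (dec_single hA₁) (dec_add (dec_single hA₂) hq₃')
      have hms : 1 + (1 + m') = m' + 2 := by omega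
      have hgs : γ + q₀ = g 0 + g 1 := by rw [hgsum, Fin.sum_univ_two]
      have hαe : (g 0 + q₁) + ((g 1 + q₂) + q₃) = α := by
        rw [hαγq, hq0sum, hq1sum, hq2sum]
        have h3 : (g 0 + q₁) + ((g 1 + q₂) + q₃) = (g 0 + g 1) + (q₁ + (q₂ + q₃)) := by abel
        rw [h3, ← hgs]
        abel
      rw [hms, hαe] at hcomb
      exact hcomb
  refine ⟨main, ⟨hk0, main⟩, ?_⟩
  intro k' hk'
  exact hkmin ⟨hk'.1, hk'.2 k' le_rfl⟩
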